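/- With μ_θ = β^{1/p}θ^{-1/p}, m_θ as above, and j_θ(m) = θ√(m − μ_θ) + (1−θ)√m, the quantity c*_∞(θ) := m_θ/j_θ(m_θ) tends to +∞ as θ → 0⁺. -/
import Mathlib


open Filter

lemma sqrt_tendsto_atTop : Tendsto Real.sqrt atTop atTop := by
  have h := tendsto_rpow_atTop (y := (1:ℝ)/2) (by norm_num)
  exact h.congr fun x => (Real.sqrt_eq_rpow x).symm

lemma key_bound (β p θ : ℝ) (hβ : 0 < β) (hθ : 0 < θ) (hθ1 : θ < 1) :
    Real.sqrt (β ^ (1 / p) * θ ^ (-(1 / p))) / 2 ≤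
      (8 * (β ^ (1 / p) * θ ^ (-(1 / p))) * θ ^ 2 /
        (3 * θ ^ 2 + 2 * θ - 1 + (1 - θ) * Real.sqrt (9 * θ ^ 2 - 2 * θ + 1))) /
      (θ * Real.sqrt ((8 * (β ^ (1 / p) * θ ^ (-(1 / p))) * θ ^ 2 /
        (3 * θ ^ 2 + 2 * θ - 1 + (1 - θ) * Real.sqrt (9 * θ ^ 2 - 2 * θ + 1))) -
          (β ^ (1 / p) * θ ^ (-(1 / p)))) +
       (1 - θ) * Real.sqrt (8 * (β ^ (1 / p) * θ ^ (-(1 / p))) * θ ^ 2 /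
        (3 * θ ^ 2 + 2 * θ - 1 + (1 - θ) * Real.sqrt (9 * θ ^ 2 - 2 * θ + 1)))) := by
  set μ := β ^ (1 / p) * θ ^ (-(1 / p)) with hμdef
  have hμ : 0 < μ := by positivity
  set s := Real.sqrt (9 * θ ^ 2 - 2 * θ + 1) with hsdef
  have hs2 : s ^ 2 = 9 * θ ^ 2 - 2 * θ + 1 := Real.sq_sqrt (by nlinarith)
  have hs : 1 - θ ≤ s := by
    have h := Real.sqrt_le_sqrt (show (1 - θ) ^ 2 ≤ 9 * θ ^ 2 - 2 * θ + 1 by nlinarith)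
    rwa [Real.sqrt_sq (by linarith)] at h
  set D := 3 * θ ^ 2 + 2 * θ - 1 + (1 - θ) * s with hDdef
  have hD1 : 4 * θ ^ 2 ≤ D := by nlinarith
  have hD2 : D ≤ 8 * θ ^ 2 := by nlinarith [sq_nonneg (s - (1 - θ))]
  have hDpos : 0 < D := by nlinarith
  set m := 8 * μ * θ ^ 2 / D with hmdef
  have hm_pos : 0 < m := by positivity
  have hm_lb : μ ≤ m := by
    rw [hmdef, le_div_iff₀ hDpos]; nlinarith
  have hm_ub : m ≤ 2 * μ := by
    rw [hmdef, div_le_iff₀ hDpos]; nlinarith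
  have hsqm : 0 < Real.sqrt m := Real.sqrt_pos.mpr hm_pos
  set j := θ * Real.sqrt (m - μ) + (1 - θ) * Real.sqrt m with hjdef
  have hj_pos : 0 < j := by
    have h1 : 0 ≤ θ * Real.sqrt (m - μ) := mul_nonneg hθ.le (Real.sqrt_nonneg _)
    have h2 : 0 < (1 - θ) * Real.sqrt m := mul_pos (by linarith) hsqm
    linarith
  have hsq : Real.sqrt (m - μ) ≤ Real.sqrt m := Real.sqrt_le_sqrt (by linarith)
  have hj_ub : j ≤ 2 * Real.sqrt μ := by
    have h1 : j ≤ Real.sqrt m := by nlinarith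
    have h2 : Real.sqrt m ≤ 2 * Real.sqrt μ := by
      have h3 : m ≤ (2 * Real.sqrt μ) ^ 2 := by
        have := Real.sq_sqrt hμ.le
        nlinarith
      calc Real.sqrt m ≤ Real.sqrt ((2 * Real.sqrt μ) ^ 2) := Real.sqrt_le_sqrt h3
        _ = 2 * Real.sqrt μ := Real.sqrt_sq (by positivity)
    linarith
  have heq : Real.sqrt μ / 2 = μ / (2 * Real.sqrt μ) := by
    rw [div_eq_div_iff (by norm_num) (by positivity)]
    have := Real.sq_sqrt hμ.le
    nlinarith
  rw [heq]
  exact div_le_div₀ hm_pos.le hm_lb hj_pos hj_ub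

theorem stmt_9 (β p : ℝ) (hβ : 0 < β) (hp : 1 < p) :
    Tendsto (fun θ : ℝ =>
      let μ := β ^ (1 / p) * θ ^ (-(1 / p))
      let m := 8 * μ * θ ^ 2 /
        (3 * θ ^ 2 + 2 * θ - 1 + (1 - θ) * Real.sqrt (9 * θ ^ 2 - 2 * θ + 1))
      m / (θ * Real.sqrt (m - μ) + (1 - θ) * Real.sqrt m))
      (nhdsWithin 0 (Set.Ioi 0)) atTop := by
  have hp0 : 0 < 1 / p := by positivity
  have hlow : Tendsto (fun θ : ℝ => Real.sqrt (β ^ (1 / p) * θ ^ (-(1 / p))) / 2)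
      (nhdsWithin 0 (Set.Ioi 0)) atTop := by
    have h1 : Tendsto (fun θ : ℝ => θ ^ (-(1 / p))) (nhdsWithin 0 (Set.Ioi 0)) atTop := by
      have h2 := (tendsto_rpow_atTop hp0).comp tendsto_inv_nhdsGT_zero
      refine h2.congr' ?_
      filter_upwards [self_mem_nhdsWithin] with θ (hθ : 0 < θ)
      simp only [Function.comp]
      rw [← Real.rpow_neg_one θ, ← Real.rpow_mul hθ.le]
      norm_num
    have h3 := (h1.const_mul_atTop (r := β ^ (1 / p)) (by positivity))
    exact (sqrt_tendsto_atTop.comp h3).atTop_div_const (by norm_num)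
  refine tendsto_atTop_mono' _ ?_ hlow
  · filter_upwards [Ioo_mem_nhdsGT_of_mem
      (show (0:ℝ) ∈ Set.Ico (0:ℝ) 1 by constructor <;> norm_num)] with θ hθ
    exact key_bound β p θ hβ hθ.1 hθ.2
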